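/- Assume β > 0 and γ_i ≤ μ_i for every i = 1,…,m. Then for every x ∈ K₊ and every u ∈ Δ, ⟨b(x,u), ∇Ψ(x)⟩ ≤ -(β/m) ∑_{i=1}^m ψ'(x_i) ≤ -β/m. -/

import Mathlib

open scoped BigOperators

noncomputable section

/-- The piecewise function `ψ` from Definition 1 of the paper. -/
def psi (t : ℝ) : ℝ :=
  if t ≤ -1 then -(1/2)
  else if t ≤ 0 then (t+1)^3 - (1/2)*(t+1)^4 - 1/2
  else t

/-- `Ψ(x) = ∑ i, ψ(x_i)/μ_i`. -/
def Psi (m : ℕ) (μ : Fin m → ℝ) (x : Fin m → ℝ) : ℝ := ∑ i, psi (x i) / μ i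

/-- The drift `b(x,u) = -(β/m) M e - M (x - ⟨e,x⟩⁺ u) - ⟨e,x⟩⁺ Γ u`, written
componentwise, where `M = diag(μ)` and `Γ = diag(γ)`. -/
def drift (m : ℕ) (μ γ : Fin m → ℝ) (β : ℝ) (x u : Fin m → ℝ) : Fin m → ℝ :=
  fun i => -(β / (m : ℝ)) * μ i - μ i * (x i - max (∑ j, x j) 0 * u i)
    - max (∑ j, x j) 0 * (γ i * u i)

/- Auxiliary: the derivative of `psi`. -/
def psi' (t : ℝ) : ℝ :=
  if t ≤ -1 then 0
  else if t ≤ 0 then 3*(t+1)^2 - 2*(t+1)^3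
  else 1

lemma hasDerivAt_pmid (t : ℝ) :
    HasDerivAt (fun s : ℝ => (s+1)^3 - (1/2)*(s+1)^4 - 1/2)
      (3*(t+1)^2 - 2*(t+1)^3) t := by
  have h1 : HasDerivAt (fun s : ℝ => s + 1) 1 t := (hasDerivAt_id t).add_const 1
  have h3 := h1.pow 3
  have h4 := (h1.pow 4).const_mul (1/2 : ℝ)
  have := (h3.sub h4).sub_const (1/2)
  refine this.congr_deriv ?_
  push_cast
  ring

lemma psi_eq_mid {s : ℝ} (h1 : -1 ≤ s) (h2 : s ≤ 0) :
    psi s = (s+1)^3 - (1/2)*(s+1)^4 - 1/2 := by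
  rcases eq_or_lt_of_le h1 with he | hl
  · rw [← he]; norm_num [psi]
  · simp only [psi, if_neg (not_le.mpr hl), if_pos h2]

lemma psi_eq_id {s : ℝ} (h : 0 ≤ s) : psi s = s := by
  rcases eq_or_lt_of_le h with he | hl
  · rw [← he]; norm_num [psi]
  · simp only [psi, if_neg (by linarith : ¬ s ≤ -1), if_neg (not_le.mpr hl)]

lemma psi_eq_const {s : ℝ} (h : s ≤ -1) : psi s = -(1/2) := by
  simp only [psi, if_pos h]

lemma hasDerivAt_psi (t : ℝ) : HasDerivAt psi (psi' t) t := by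
  rcases lt_trichotomy t (-1) with ht | ht | ht
  · have hmem : Set.Iio (-1 : ℝ) ∈ nhds t := Iio_mem_nhds ht
    have heq : psi =ᶠ[nhds t] (fun _ => -(1/2 : ℝ)) :=
      Filter.eventually_of_mem hmem (fun s hs => psi_eq_const (le_of_lt hs))
    have : HasDerivAt (fun _ : ℝ => -(1/2 : ℝ)) 0 t := hasDerivAt_const t _
    have := this.congr_of_eventuallyEq heq
    simpa [psi', ht.le] using this
  · subst ht
    have hL : HasDerivWithinAt psi 0 (Set.Iic (-1 : ℝ)) (-1) := by
      have : HasDerivWithinAt (fun _ : ℝ => -(1/2 : ℝ)) 0 (Set.Iic (-1 : ℝ)) (-1) :=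
        (hasDerivAt_const _ _).hasDerivWithinAt
      exact this.congr (fun s hs => psi_eq_const hs) (psi_eq_const le_rfl)
    have hR : HasDerivWithinAt psi 0 (Set.Icc (-1 : ℝ) 0) (-1) := by
      have h0 : HasDerivWithinAt (fun s : ℝ => (s+1)^3 - (1/2)*(s+1)^4 - 1/2)
          (3*(-1+1)^2 - 2*(-1+1)^3) (Set.Icc (-1 : ℝ) 0) (-1) :=
        (hasDerivAt_pmid (-1)).hasDerivWithinAt
      have h1 : HasDerivWithinAt psi (3*(-1+1)^2 - 2*(-1+1)^3) (Set.Icc (-1 : ℝ) 0) (-1) :=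
        h0.congr (fun s hs => psi_eq_mid hs.1 hs.2) (psi_eq_mid le_rfl (by norm_num))
      convert h1 using 1; norm_num
    have hU := hL.union hR
    have hmem : Set.Iic (-1 : ℝ) ∪ Set.Icc (-1 : ℝ) 0 ∈ nhds (-1 : ℝ) := by
      apply Filter.mem_of_superset (Iio_mem_nhds (show (-1:ℝ) < 0 by norm_num))
      intro s hs
      rcases le_or_gt s (-1) with h | h
      · exact Or.inl h
      · exact Or.inr ⟨h.le, le_of_lt hs⟩
    have := hU.hasDerivAt hmem
    simpa [psi'] using this
  · rcases lt_trichotomy t 0 with ht0 | ht0 | ht0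
    · have hmem : Set.Ioo (-1 : ℝ) 0 ∈ nhds t := Ioo_mem_nhds ht ht0
      have heq : psi =ᶠ[nhds t] (fun s : ℝ => (s+1)^3 - (1/2)*(s+1)^4 - 1/2) :=
        Filter.eventually_of_mem hmem (fun s hs => psi_eq_mid hs.1.le hs.2.le)
      have := (hasDerivAt_pmid t).congr_of_eventuallyEq heq
      simpa [psi', not_le.mpr ht, ht0.le] using this
    · subst ht0
      have hL : HasDerivWithinAt psi 1 (Set.Icc (-1 : ℝ) 0) 0 := by
        have h0 : HasDerivWithinAt (fun s : ℝ => (s+1)^3 - (1/2)*(s+1)^4 - 1/2)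
            (3*(0+1)^2 - 2*(0+1)^3) (Set.Icc (-1 : ℝ) 0) 0 :=
          (hasDerivAt_pmid 0).hasDerivWithinAt
        have h1 := h0.congr (fun s hs => psi_eq_mid hs.1 hs.2)
          (psi_eq_mid (by norm_num) le_rfl)
        exact h1.congr_deriv (by norm_num)
      have hR : HasDerivWithinAt psi 1 (Set.Ici (0 : ℝ)) 0 := by
        have : HasDerivWithinAt (fun s : ℝ => s) 1 (Set.Ici (0 : ℝ)) 0 :=
          (hasDerivAt_id 0).hasDerivWithinAt
        exact this.congr (fun s hs => psi_eq_id hs) (psi_eq_id le_rfl)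
      have hU := hL.union hR
      have hmem : Set.Icc (-1 : ℝ) 0 ∪ Set.Ici (0 : ℝ) ∈ nhds (0 : ℝ) := by
        apply Filter.mem_of_superset (Ioi_mem_nhds (show (-1:ℝ) < 0 by norm_num))
        intro s hs
        rcases le_or_gt s 0 with h | h
        · exact Or.inl ⟨le_of_lt hs, h⟩
        · exact Or.inr h.le
      have := hU.hasDerivAt hmem
      have hval : psi' 0 = 1 := by norm_num [psi']
      rw [hval]
      exact this
    · have hmem : Set.Ioi (0 : ℝ) ∈ nhds t := Ioi_mem_nhds ht0
      have heq : psi =ᶠ[nhds t] (fun s : ℝ => s) :=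
        Filter.eventually_of_mem hmem (fun s hs => psi_eq_id (le_of_lt hs))
      have := (hasDerivAt_id t).congr_of_eventuallyEq heq
      simpa [psi', not_le.mpr ht0, not_le.mpr (by linarith : (-1:ℝ) < t)] using this

lemma deriv_psi (t : ℝ) : deriv psi t = psi' t := (hasDerivAt_psi t).deriv

lemma psi'_nonneg (t : ℝ) : 0 ≤ psi' t := by
  unfold psi'
  split_ifs with h1 h2
  · norm_num
  · nlinarith [sq_nonneg (t+1), (by linarith : (0:ℝ) ≤ t + 1)]
  · norm_num

lemma psi'_le_one (t : ℝ) : psi' t ≤ 1 := by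
  unfold psi'
  split_ifs with h1 h2
  · norm_num
  · nlinarith [sq_nonneg (1 - (t+1)), (by linarith : (0:ℝ) ≤ t + 1)]
  · norm_num

lemma psi'_of_pos {t : ℝ} (h : 0 < t) : psi' t = 1 := by
  unfold psi'
  rw [if_neg (by linarith), if_neg (by linarith)]

lemma le_psi'_mul (t : ℝ) : t ≤ psi' t * t := by
  rcases le_or_gt t 0 with h | h
  · nlinarith [psi'_le_one t]
  · rw [psi'_of_pos h]; nlinarith

lemma hasFDerivAt_Psi (m : ℕ) (μ : Fin m → ℝ) (hμ : ∀ i, 0 < μ i) (x : Fin m → ℝ) :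
    HasFDerivAt (Psi m μ)
      (∑ i, (psi' (x i) / μ i) • (ContinuousLinearMap.proj i : (Fin m → ℝ) →L[ℝ] ℝ)) x := by
  have h : ∀ i ∈ Finset.univ, HasFDerivAt (fun y : Fin m → ℝ => psi (y i) / μ i)
      ((psi' (x i) / μ i) • (ContinuousLinearMap.proj i : (Fin m → ℝ) →L[ℝ] ℝ)) x := by
    intro i _
    have hp : HasFDerivAt (fun y : Fin m → ℝ => y i)
        (ContinuousLinearMap.proj i : (Fin m → ℝ) →L[ℝ] ℝ) x :=
      (ContinuousLinearMap.proj i : (Fin m → ℝ) →L[ℝ] ℝ).hasFDerivAt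
    have hc := (hasDerivAt_psi (x i)).comp_hasFDerivAt x hp
    have hd := hc.const_mul (μ i)⁻¹
    have : ((μ i)⁻¹ • psi' (x i) • (ContinuousLinearMap.proj i : (Fin m → ℝ) →L[ℝ] ℝ))
        = (psi' (x i) / μ i) • (ContinuousLinearMap.proj i : (Fin m → ℝ) →L[ℝ] ℝ) := by
      rw [smul_smul]; congr 1; field_simp
    rw [this] at hd
    have hfun : (fun y : Fin m → ℝ => psi (y i) / μ i)
        = fun y : Fin m → ℝ => (μ i)⁻¹ * (psi ∘ fun y : Fin m → ℝ => y i) y := by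
      funext y; simp [Function.comp, div_eq_inv_mul]
    rw [hfun]
    exact hd
  exact HasFDerivAt.fun_sum h

/-- If `β > 0` and `γ_i ≤ μ_i` for all `i`, then for `x ∈ K₊` and `u ∈ Δ`,
`⟨b(x,u), ∇Ψ(x)⟩ ≤ -(β/m) ∑ i, ψ'(x_i) ≤ -β/m`. -/
theorem stmt_3 (m : ℕ) (hm : 1 ≤ m) (μ γ : Fin m → ℝ)
    (hμ : ∀ i, 0 < μ i) (hγ : ∀ i, 0 ≤ γ i) (hγμ : ∀ i, γ i ≤ μ i)
    (β : ℝ) (hβ : 0 < β)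
    (x : Fin m → ℝ) (hx : 0 < ∑ i, x i)
    (u : Fin m → ℝ) (hu0 : ∀ i, 0 ≤ u i) (hu1 : ∑ i, u i = 1) :
    fderiv ℝ (Psi m μ) x (drift m μ γ β x u) ≤ -(β / (m : ℝ)) * ∑ i, deriv psi (x i) ∧
    -(β / (m : ℝ)) * ∑ i, deriv psi (x i) ≤ -(β / (m : ℝ)) := by
  have hβm : 0 < β / (m : ℝ) := by
    apply div_pos hβ
    exact_mod_cast Nat.lt_of_lt_of_le Nat.zero_lt_one hm
  have hS : max (∑ j, x j) 0 = ∑ j, x j := max_eq_left hx.le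
  set S := ∑ j, x j with hSdef
  set d : Fin m → ℝ := fun i => psi' (x i) with hd
  -- rewrite deriv psi as psi'
  have hder : ∀ i, deriv psi (x i) = d i := fun i => deriv_psi (x i)
  -- compute the fderiv application
  have hF := (hasFDerivAt_Psi m μ hμ x).fderiv
  rw [hF]
  have happ : (∑ i, (psi' (x i) / μ i) •
        (ContinuousLinearMap.proj i : (Fin m → ℝ) →L[ℝ] ℝ)) (drift m μ γ β x u)
      = ∑ i, (d i / μ i) * (drift m μ γ β x u i) := by
    rw [ContinuousLinearMap.sum_apply]
    simp [ContinuousLinearMap.smul_apply, ContinuousLinearMap.proj_apply, hd, smul_eq_mul]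
  rw [happ]
  -- per-term rewriting of the sum
  have hterm : ∀ i, (d i / μ i) * (drift m μ γ β x u i)
      = -(β / (m : ℝ)) * d i - d i * x i + S * (d i * u i * (1 - γ i / μ i)) := by
    intro i
    have hμi := (hμ i).ne'
    unfold drift
    rw [hS]
    field_simp
    ring
  have hsum : ∑ i, (d i / μ i) * (drift m μ γ β x u i)
      = -(β / (m : ℝ)) * (∑ i, d i) - (∑ i, d i * x i)
        + S * (∑ i, d i * u i * (1 - γ i / μ i)) := by
    rw [Finset.mul_sum, Finset.mul_sum, ← Finset.sum_sub_distrib, ← Finset.sum_add_distrib]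
    exact Finset.sum_congr rfl (fun i _ => hterm i)
  constructor
  · rw [hsum]
    simp only [hder]
    have hA : S ≤ ∑ i, d i * x i := by
      rw [hSdef]
      exact Finset.sum_le_sum (fun i _ => by
        have := le_psi'_mul (x i); simpa [hd] using this)
    have hB : ∑ i, d i * u i * (1 - γ i / μ i) ≤ ∑ i, u i := by
      apply Finset.sum_le_sum
      intro i _
      have h1 : 0 ≤ d i := psi'_nonneg (x i)
      have h2 : d i ≤ 1 := psi'_le_one (x i)
      have h3 : 0 ≤ γ i / μ i := div_nonneg (hγ i) (hμ i).le
      have h4 : γ i / μ i ≤ 1 := (div_le_one (hμ i)).mpr (hγμ i)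
      have h5 : d i * (1 - γ i / μ i) ≤ 1 := by nlinarith
      calc d i * u i * (1 - γ i / μ i) = (d i * (1 - γ i / μ i)) * u i := by ring
        _ ≤ 1 * u i := mul_le_mul_of_nonneg_right h5 (hu0 i)
        _ = u i := one_mul _
    rw [hu1] at hB
    nlinarith [hx, hB, hA]
  · simp only [hder]
    have h1 : (1 : ℝ) ≤ ∑ i, d i := by
      obtain ⟨i, hi⟩ : ∃ i, 0 < x i := by
        by_contra hcon
        push_neg at hcon
        have : ∑ i, x i ≤ 0 := Finset.sum_nonpos (fun i _ => hcon i)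
        linarith
      have hdi : d i = 1 := psi'_of_pos hi
      calc (1 : ℝ) = d i := hdi.symm
        _ ≤ ∑ i, d i := Finset.single_le_sum (fun j _ => psi'_nonneg (x j)) (Finset.mem_univ i)
    nlinarith
end
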